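/- For every r ≥ 3 there exists a constant c > 0 such that for every n ≥ 1 there exists a family F of subsets of [n] = {1,…,n} containing no near-sunflower of size r with |F| ≥ c·(2/(r+1)^{1/(r−1)})^n. -/

import Mathlib

open Finset
open scoped symmDiff



/-- A family `H` of `r` distinct subsets of `[n]` is a *near-sunflower of size `r`*
if every `i ∈ [n]` belongs to either `0`, `1`, `r-1` or `r` of the sets in `H`. -/
def IsNearSunflower (n r : ℕ) (H : Finset (Finset (Fin n))) : Prop :=
  H.card = r ∧
  ∀ i : Fin n, (H.filter (fun A => i ∈ A)).card ∈ ({0, 1, r - 1, r} : Set ℕ)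

lemma ns_card_le (n r : ℕ) (hr : 3 ≤ r) [DecidablePred (IsNearSunflower n r)] :
    ((Finset.univ : Finset (Finset (Finset (Fin n)))).filter
      (fun H => IsNearSunflower n r H)).card ≤ 2 ^ n * (r + 1) ^ n := by
  classical
  set Φ : Finset (Fin n) × (Fin n → Option (Fin r)) → Finset (Finset (Fin n)) :=
    fun w => Finset.image
      (fun j : Fin r => w.1 ∆ (Finset.univ.filter fun i => w.2 i = some j)) Finset.univ with hΦ
  have hsub : (Finset.univ : Finset (Finset (Finset (Fin n)))).filter
      (fun H => IsNearSunflower n r H) ⊆ Finset.image Φ Finset.univ := by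
    intro H hH
    rw [mem_filter] at hH
    obtain ⟨-, hcard, hdeg⟩ : _ ∧ H.card = r ∧ _ := ⟨hH.1, hH.2.1, hH.2.2⟩
    have hcard' : Fintype.card {x // x ∈ H} = r := by rw [Fintype.card_coe, hcard]
    set e := Fintype.equivFinOfCardEq hcard' with he
    set A : Fin r → Finset (Fin n) := fun j => ((e.symm j : {x // x ∈ H}) : Finset (Fin n)) with hA
    have hAmem : ∀ j, A j ∈ H := fun j => (e.symm j).2
    have hAinj : Function.Injective A := fun j j' h =>
      e.symm.injective (Subtype.ext h)
    set B : Finset (Fin n) :=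
      Finset.univ.filter (fun i => r - 1 ≤ (H.filter (fun A => i ∈ A)).card) with hB
    -- uniqueness
    have hdegle : ∀ i : Fin n, (H.filter (fun A => i ∈ A)).card ≤ r := by
      intro i; rw [← hcard]; exact card_filter_le _ _
    have huniq : ∀ (i : Fin n) (j j' : Fin r),
        i ∈ A j ∆ B → i ∈ A j' ∆ B → j = j' := by
      intro i j j' h1 h2
      by_contra hne
      have hAne : A j ≠ A j' := fun h => hne (hAinj h)
      have hd := hdeg i
      simp only [Set.mem_insert_iff, Set.mem_singleton_iff] at hd
      by_cases hiB : i ∈ B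
      · have hB1 : r - 1 ≤ (H.filter (fun A => i ∈ A)).card := by
          rw [hB, mem_filter] at hiB; exact hiB.2
        have hnj : i ∉ A j := by
          rcases Finset.mem_symmDiff.mp h1 with ⟨_, hn⟩ | ⟨_, hn⟩
          · exact absurd hiB hn
          · exact hn
        have hnj' : i ∉ A j' := by
          rcases Finset.mem_symmDiff.mp h2 with ⟨_, hn⟩ | ⟨_, hn⟩
          · exact absurd hiB hn
          · exact hn
        have h2le : 2 ≤ (H.filter (fun A => i ∉ A)).card := by
          exact Finset.one_lt_card.mpr ⟨A j, mem_filter.mpr ⟨hAmem j, hnj⟩,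
            A j', mem_filter.mpr ⟨hAmem j', hnj'⟩, hAne⟩
        have hsum := Finset.card_filter_add_card_filter_not
          (s := H) (p := fun A => i ∈ A)
        rw [hcard] at hsum
        omega
      · have hB1 : (H.filter (fun A => i ∈ A)).card < r - 1 := by
          rw [hB, mem_filter] at hiB
          simp only [mem_univ, true_and] at hiB
          omega
        have hj : i ∈ A j := by
          rcases Finset.mem_symmDiff.mp h1 with ⟨hm, _⟩ | ⟨hm, _⟩
          · exact hm
          · exact absurd hm hiB
        have hj' : i ∈ A j' := by
          rcases Finset.mem_symmDiff.mp h2 with ⟨hm, _⟩ | ⟨hm, _⟩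
          · exact hm
          · exact absurd hm hiB
        have h2le : 2 ≤ (H.filter (fun A => i ∈ A)).card := by
          exact Finset.one_lt_card.mpr ⟨A j, mem_filter.mpr ⟨hAmem j, hj⟩,
            A j', mem_filter.mpr ⟨hAmem j', hj'⟩, hAne⟩
        omega
    set g : Fin n → Option (Fin r) := fun i =>
      if h : ∃ j, i ∈ A j ∆ B then some h.choose else none with hg
    have hgiff : ∀ (i : Fin n) (j : Fin r), g i = some j ↔ i ∈ A j ∆ B := by
      intro i j
      by_cases hex : ∃ j, i ∈ A j ∆ B
      · have hgi : g i = some hex.choose := dif_pos hex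
        rw [hgi]
        constructor
        · intro h
          obtain rfl : hex.choose = j := by injection h
          exact hex.choose_spec
        · intro h
          exact congrArg some (huniq i _ j hex.choose_spec h)
      · have hgi : g i = none := dif_neg hex
        rw [hgi]
        exact ⟨fun h => absurd h (by simp), fun h => absurd ⟨j, h⟩ hex⟩
    refine Finset.mem_image.mpr ⟨(B, g), mem_univ _, ?_⟩
    have hval : ∀ j : Fin r,
        B ∆ (Finset.univ.filter fun i => g i = some j) = A j := by
      intro j
      have : (Finset.univ.filter fun i => g i = some j) = A j ∆ B := by
        ext i
        simp only [mem_filter, mem_univ, true_and]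
        exact hgiff i j
      rw [this, symmDiff_comm (A j) B, symmDiff_symmDiff_cancel_left]
    have himg : Finset.image (fun j : Fin r => B ∆
        (Finset.univ.filter fun i => g i = some j)) Finset.univ
        = Finset.image A Finset.univ := by
      apply Finset.image_congr
      intro j _
      exact hval j
    have hsub2 : Finset.image A Finset.univ ⊆ H := by
      intro X hX
      obtain ⟨j, -, rfl⟩ := Finset.mem_image.mp hX
      exact hAmem j
    have hcardim : (Finset.image A Finset.univ).card = r := by
      rw [Finset.card_image_of_injective _ hAinj, card_univ, Fintype.card_fin]
    have : Finset.image A Finset.univ = H :=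
      Finset.eq_of_subset_of_card_le hsub2 (by rw [hcardim, hcard])
    simp only [hΦ]
    rw [himg, this]
  calc ((Finset.univ : Finset (Finset (Finset (Fin n)))).filter
      (fun H => IsNearSunflower n r H)).card
      ≤ (Finset.image Φ Finset.univ).card := card_le_card hsub
    _ ≤ (Finset.univ : Finset (Finset (Fin n) × (Fin n → Option (Fin r)))).card :=
        card_image_le
    _ = 2 ^ n * (r + 1) ^ n := by
        simp [card_univ]


lemma exists_good_subfamily (n r k : ℕ) (hk : k ≤ 2 ^ n)
    [DecidablePred (IsNearSunflower n r)] :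
    ∃ S : Finset (Finset (Fin n)), S.card = k ∧
      (((Finset.univ.filter (fun H => IsNearSunflower n r H)).filter (· ⊆ S)).card
          * (2 ^ n).choose k ≤
        (Finset.univ.filter (fun H => IsNearSunflower n r H)).card
          * ((2 ^ n - r).choose (k - r))) := by
  classical
  set NS := (Finset.univ.filter (fun H : Finset (Finset (Fin n)) => IsNearSunflower n r H))
    with hNS
  set P := Finset.powersetCard k (Finset.univ : Finset (Finset (Fin n))) with hP
  have hcu : (Finset.univ : Finset (Finset (Fin n))).card = 2 ^ n := by
    rw [card_univ]; simp
  have hPcard : P.card = (2 ^ n).choose k := by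
    rw [hP, card_powersetCard, hcu]
  have hPne : P.Nonempty := by
    rw [hP, Finset.powersetCard_nonempty, hcu]; exact hk
  have hbound : ∀ H ∈ NS, (P.filter (fun S => H ⊆ S)).card ≤ (2 ^ n - r).choose (k - r) := by
    intro H hH
    have hHcard : H.card = r := by
      rw [hNS, mem_filter] at hH
      exact hH.2.1
    have htarget : ((Finset.univ \ H).powersetCard (k - r)).card
        = (2 ^ n - r).choose (k - r) := by
      rw [card_powersetCard, card_sdiff_of_subset (subset_univ H), hcu, hHcard]
    rw [← htarget]
    apply Finset.card_le_card_of_injOn (fun S => S \ H)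
    · intro S hS
      rw [mem_coe, mem_filter] at hS
      obtain ⟨hSP, hHS⟩ := hS
      rw [hP, mem_powersetCard] at hSP
      rw [mem_coe, mem_powersetCard]
      refine ⟨sdiff_subset_sdiff (subset_univ S) (Finset.Subset.refl H), ?_⟩
      rw [card_sdiff_of_subset hHS, hSP.2, hHcard]
    · intro S1 h1 S2 h2 heq
      rw [mem_coe, mem_filter] at h1 h2
      have e1 := Finset.sdiff_union_of_subset h1.2
      have e2 := Finset.sdiff_union_of_subset h2.2
      rw [← e1, ← e2]
      simp only at heq
      rw [heq]
  have hsum : ∑ S ∈ P, (NS.filter (· ⊆ S)).card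
      = ∑ H ∈ NS, (P.filter (fun S => H ⊆ S)).card := by
    simp_rw [card_filter]
    exact Finset.sum_comm
  obtain ⟨S₀, hS₀, hmin⟩ := P.exists_min_image (fun S => (NS.filter (· ⊆ S)).card) hPne
  have hS₀card : S₀.card = k := (mem_powersetCard.mp hS₀).2
  refine ⟨S₀, hS₀card, ?_⟩
  have h1 : P.card * (NS.filter (· ⊆ S₀)).card ≤ ∑ S ∈ P, (NS.filter (· ⊆ S)).card := by
    calc P.card * (NS.filter (· ⊆ S₀)).card
        = ∑ _S ∈ P, (NS.filter (· ⊆ S₀)).card := by rw [Finset.sum_const, smul_eq_mul]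
      _ ≤ ∑ S ∈ P, (NS.filter (· ⊆ S)).card := Finset.sum_le_sum (fun S hS => hmin S hS)
  have h2 : ∑ H ∈ NS, (P.filter (fun S => H ⊆ S)).card
      ≤ NS.card * ((2 ^ n - r).choose (k - r)) := by
    calc ∑ H ∈ NS, (P.filter (fun S => H ⊆ S)).card
        ≤ ∑ _H ∈ NS, (2 ^ n - r).choose (k - r) := Finset.sum_le_sum hbound
      _ = NS.card * ((2 ^ n - r).choose (k - r)) := by rw [Finset.sum_const, smul_eq_mul]
  rw [mul_comm]
  rw [← hPcard]
  exact le_trans h1 (le_trans (le_of_eq hsum) h2)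


lemma key_real (r n k : ℕ) (hr : 3 ≤ r) (hN : 2 * r ≤ 2 ^ n) (x : ℝ) (hxpos : 0 ≤ x)
    (hx : x ^ (r - 1) * ((r : ℝ) + 1) ^ n = (2 : ℝ) ^ ((r - 1) * n))
    (hk : (k : ℝ) ≤ x / 4) :
    2 * (2 ^ n * (r + 1) ^ n) * k.choose r ≤ k * (2 ^ n).choose r := by
  -- reduce to descFactorial
  refine Nat.le_of_mul_le_mul_left ?_ r.factorial_pos
  have e1 : r.factorial * (2 * (2 ^ n * (r + 1) ^ n) * k.choose r)
      = 2 * (2 ^ n * (r + 1) ^ n) * Nat.descFactorial k r := by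
    rw [Nat.descFactorial_eq_factorial_mul_choose]; ring
  have e2 : r.factorial * (k * (2 ^ n).choose r) = k * Nat.descFactorial (2 ^ n) r := by
    rw [Nat.descFactorial_eq_factorial_mul_choose]; ring
  rw [e1, e2]
  -- bound descFactorials by powers
  have h1 : Nat.descFactorial k r ≤ k ^ r := Nat.descFactorial_le_pow k r
  have h2 : (2 ^ n - r) ^ r ≤ Nat.descFactorial (2 ^ n) r := by
    calc (2 ^ n - r) ^ r ≤ (2 ^ n + 1 - r) ^ r := Nat.pow_le_pow_left (by omega) r
      _ ≤ Nat.descFactorial (2 ^ n) r := Nat.pow_sub_le_descFactorial (2 ^ n) r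
  have main : 2 * (2 ^ n * (r + 1) ^ n) * k ^ r ≤ k * (2 ^ n - r) ^ r := by
    -- prove in ℝ
    have hcast : ((2 ^ n - r : ℕ) : ℝ) = (2 : ℝ) ^ n - r := by
      have : r ≤ 2 ^ n := by omega
      push_cast [this]
      ring
    rw [← Nat.cast_le (α := ℝ)]
    push_cast [hcast]
    have hrn : (r : ℝ) ≤ (2 : ℝ) ^ n / 2 := by
      have : ((2 * r : ℕ) : ℝ) ≤ ((2 ^ n : ℕ) : ℝ) := Nat.cast_le.mpr hN
      push_cast at this
      linarith
    have hNr : (2 : ℝ) ^ n / 2 ≤ (2 : ℝ) ^ n - r := by linarith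
    have hk0 : (0 : ℝ) ≤ (k : ℝ) := Nat.cast_nonneg k
    have hkr : (k : ℝ) ^ (r - 1) ≤ (x / 4) ^ (r - 1) := pow_le_pow_left₀ hk0 hk r.pred
    have hsplit : (k : ℝ) ^ r = (k : ℝ) ^ (r - 1) * k := by
      rw [← pow_succ]
      congr 1
      omega
    calc 2 * ((2 : ℝ) ^ n * ((r : ℝ) + 1) ^ n) * (k : ℝ) ^ r
        = 2 * (2 : ℝ) ^ n * (((r : ℝ) + 1) ^ n * (k : ℝ) ^ (r - 1)) * k := by
          rw [hsplit]; ring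
      _ ≤ 2 * (2 : ℝ) ^ n * (((r : ℝ) + 1) ^ n * (x / 4) ^ (r - 1)) * k := by
          have hb : (0 : ℝ) ≤ 2 * (2 : ℝ) ^ n := by positivity
          have h1pn : (0 : ℝ) ≤ ((r : ℝ) + 1) ^ n := by positivity
          apply mul_le_mul_of_nonneg_right _ hk0
          apply mul_le_mul_of_nonneg_left _ hb
          exact mul_le_mul_of_nonneg_left hkr h1pn
      _ = 2 * (2 : ℝ) ^ n * ((x ^ (r - 1) * ((r : ℝ) + 1) ^ n) / 4 ^ (r - 1)) * k := by
          rw [div_pow]; ring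
      _ = 2 * (2 : ℝ) ^ n * ((2 : ℝ) ^ ((r - 1) * n) / 4 ^ (r - 1)) * k := by rw [hx]
      _ = (2 : ℝ) ^ (1 + n + (r - 1) * n) / (2 : ℝ) ^ (2 * (r - 1)) * k := by
          rw [show (4 : ℝ) = 2 ^ 2 by norm_num, ← pow_mul, pow_add, pow_add, pow_one]
          ring
      _ ≤ (2 : ℝ) ^ (r * n) / (2 : ℝ) ^ r * k := by
          apply mul_le_mul_of_nonneg_right _ hk0
          rw [div_le_div_iff₀ (by positivity) (by positivity), ← pow_add, ← pow_add]
          apply pow_le_pow_right₀ (by norm_num)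
          have h3 : 1 + n + (r - 1) * n = r * n + 1 := by
            obtain ⟨s, rfl⟩ : ∃ s, r = s + 1 := ⟨r - 1, by omega⟩
            simp only [Nat.add_sub_cancel]
            ring
          omega
      _ = ((2 : ℝ) ^ n / 2) ^ r * k := by
          rw [div_pow, ← pow_mul, mul_comm r n]
      _ ≤ ((2 : ℝ) ^ n - r) ^ r * k := by
          apply mul_le_mul_of_nonneg_right _ hk0
          exact pow_le_pow_left₀ (by positivity) hNr r
      _ = k * ((2 : ℝ) ^ n - r) ^ r := by ring
  calc 2 * (2 ^ n * (r + 1) ^ n) * Nat.descFactorial k r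
      ≤ 2 * (2 ^ n * (r + 1) ^ n) * k ^ r := Nat.mul_le_mul_left _ h1
    _ ≤ k * (2 ^ n - r) ^ r := main
    _ ≤ k * Nat.descFactorial (2 ^ n) r := Nat.mul_le_mul_left _ h2



private lemma succ_le_two_pow' {r : ℕ} (hr : 3 ≤ r) : r + 1 ≤ 2 ^ (r - 1) := by
  induction r, hr using Nat.le_induction with
  | base => norm_num
  | succ m hm ih =>
    have h1 : m + 1 ≤ 2 ^ (m - 1) := ih
    have h2 : m + 1 - 1 = m - 1 + 1 := by omega
    rw [h2, pow_succ]
    omega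


/-- For every `r ≥ 3` there is `c > 0` such that for every `n ≥ 1` there is a family of
subsets of `[n]` with no near-sunflower of size `r` of cardinality at least
`c·(2/(r+1)^(1/(r-1)))^n`. -/
theorem near_sunflower_lower_bound (r : ℕ) (hr : 3 ≤ r) :
    ∃ c : ℝ, 0 < c ∧ ∀ n : ℕ, 1 ≤ n →
      ∃ F : Finset (Finset (Fin n)),
        (∀ H ⊆ F, ¬ IsNearSunflower n r H) ∧
        c * (2 / ((r : ℝ) + 1) ^ ((1 : ℝ) / ((r : ℝ) - 1))) ^ n ≤ (F.card : ℝ) := by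
  classical
  refine ⟨1/16, by norm_num, fun n hn => ?_⟩
  set p : ℝ := ((r : ℝ) + 1) ^ ((1 : ℝ) / ((r : ℝ) - 1)) with hp
  have hrR : (3 : ℝ) ≤ (r : ℝ) := by exact_mod_cast hr
  have hr1 : ((r : ℝ) - 1) ≠ 0 := by linarith
  have hppos : 0 < p := Real.rpow_pos_of_pos (by linarith) _
  have hcast1 : ((r - 1 : ℕ) : ℝ) = (r : ℝ) - 1 := by
    have h1 : 1 ≤ r := by omega
    rw [Nat.cast_sub h1, Nat.cast_one]
  have hpow : p ^ (r - 1) = (r : ℝ) + 1 := by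
    rw [← Real.rpow_natCast p (r - 1), hcast1, hp,
      ← Real.rpow_mul (by linarith : (0:ℝ) ≤ (r:ℝ) + 1), one_div,
      inv_mul_cancel₀ hr1, Real.rpow_one]
  have hp1 : 1 ≤ p := Real.one_le_rpow (by linarith) (div_nonneg zero_le_one (by linarith))
  have hp2 : p ≤ 2 := by
    have h1 : p ^ (r - 1) ≤ (2:ℝ) ^ (r - 1) := by
      rw [hpow]
      calc (r:ℝ) + 1 = ((r + 1 : ℕ):ℝ) := by push_cast; ring
        _ ≤ ((2 ^ (r-1) : ℕ) : ℝ) := Nat.cast_le.mpr (succ_le_two_pow' hr)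
        _ = (2:ℝ) ^ (r-1) := by push_cast; ring
    exact le_of_pow_le_pow_left₀ (by omega) (by norm_num) h1
  set x : ℝ := (2 / p) ^ n with hxdef
  have hb1 : 1 ≤ 2 / p := by rw [le_div_iff₀ hppos]; linarith
  have hb2 : 2 / p ≤ 2 := by rw [div_le_iff₀ hppos]; nlinarith
  have hxpos : 0 < x := by positivity
  have hx1 : 1 ≤ x := by
    calc (1:ℝ) = 1 ^ n := (one_pow n).symm
      _ ≤ (2/p) ^ n := pow_le_pow_left₀ zero_le_one hb1 n
  have hxN : x ≤ (2:ℝ) ^ n := by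
    rw [hxdef]
    exact pow_le_pow_left₀ (by positivity) hb2 n
  have hxid : x ^ (r - 1) * ((r : ℝ) + 1) ^ n = (2:ℝ) ^ ((r - 1) * n) := by
    have e1 : x ^ (r - 1) = (2:ℝ) ^ ((r-1)*n) / p ^ ((r-1)*n) := by
      rw [hxdef, ← pow_mul, mul_comm n (r - 1), div_pow]
    have e2 : p ^ ((r-1)*n) = ((r:ℝ)+1) ^ n := by rw [pow_mul, hpow]
    rw [e1, e2, div_mul_cancel₀]
    positivity
  have hcu : (Finset.univ : Finset (Finset (Fin n))).card = 2 ^ n := by simp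
  by_cases hmain : 8 ≤ x ∧ 2 * r ≤ 2 ^ n
  · -- main case: deletion argument
    obtain ⟨hx8, h2r⟩ := hmain
    set k := ⌊x / 4⌋₊ with hk
    have hk4 : (k:ℝ) ≤ x / 4 := Nat.floor_le (by positivity)
    have hk8 : x / 8 ≤ (k:ℝ) := by
      have h := Nat.lt_floor_add_one (x/4)
      rw [← hk] at h
      linarith
    have h2nR : ((2 ^ n : ℕ) : ℝ) = (2:ℝ) ^ n := by push_cast; ring
    have hkN : k ≤ 2 ^ n := by
      have h1 : (k:ℝ) ≤ ((2 ^ n : ℕ):ℝ) := by rw [h2nR]; linarith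
      exact_mod_cast h1
    obtain ⟨S₀, hS₀card, hS₀⟩ := exists_good_subfamily n r k hkN
    set NS := (Finset.univ.filter
      (fun H : Finset (Finset (Fin n)) => IsNearSunflower n r H)) with hNSdef
    set bad := NS.filter (· ⊆ S₀) with hbad
    have hMle : NS.card ≤ 2 ^ n * (r+1) ^ n := ns_card_le n r hr
    have h2bad : 2 * bad.card ≤ k := by
      by_cases hkr : k < r
      · have hbe : bad = ∅ := by
          rw [hbad, Finset.filter_eq_empty_iff]
          intro H hH hsub
          have h1 : H.card = r := (Finset.mem_filter.mp hH).2.1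
          have h2 : H.card ≤ k := hS₀card ▸ card_le_card hsub
          omega
        rw [hbe]
        simp
      · push_neg at hkr
        have hid : (2^n).choose k * k.choose r = (2^n).choose r * (2^n - r).choose (k - r) :=
          Nat.choose_mul hkr
        have hkey : 2 * (2^n * (r+1)^n) * k.choose r ≤ k * (2^n).choose r :=
          key_real r n k hr h2r x (le_of_lt hxpos) hxid hk4
        have hD1 : 0 < (2^n).choose r := Nat.choose_pos (by omega)
        have hD2 : 0 < (2^n - r).choose (k - r) := Nat.choose_pos (by omega)
        have step : 2 * bad.card * ((2^n).choose r * (2^n - r).choose (k-r))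
            ≤ k * ((2^n).choose r * (2^n - r).choose (k-r)) := by
          calc 2 * bad.card * ((2^n).choose r * (2^n - r).choose (k-r))
              = 2 * (bad.card * (2^n).choose k) * k.choose r := by rw [← hid]; ring
            _ ≤ 2 * (NS.card * (2^n - r).choose (k-r)) * k.choose r :=
                mul_le_mul_left (mul_le_mul_right hS₀ 2) _
            _ = (2 * NS.card * k.choose r) * (2^n - r).choose (k-r) := by ring
            _ ≤ (2 * (2^n * (r+1)^n) * k.choose r) * (2^n - r).choose (k-r) :=
                mul_le_mul_left (mul_le_mul_left (mul_le_mul_right hMle 2) _) _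
            _ ≤ (k * (2^n).choose r) * (2^n - r).choose (k-r) :=
                mul_le_mul_left hkey _
            _ = k * ((2^n).choose r * (2^n - r).choose (k-r)) := by ring
        exact Nat.le_of_mul_le_mul_right step (Nat.mul_pos hD1 hD2)
    set f : Finset (Finset (Fin n)) → Finset (Fin n) :=
      fun H => if h : H.Nonempty then h.choose else ∅ with hf
    have hfmem : ∀ H : Finset (Finset (Fin n)), H.Nonempty → f H ∈ H := by
      intro H h
      have : f H = h.choose := dif_pos h
      rw [this]
      exact h.choose_spec
    refine ⟨S₀ \ bad.image f, ?_, ?_⟩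
    · intro H hHF hNSp
      have hHS₀ : H ⊆ S₀ := hHF.trans sdiff_subset
      have hHbad : H ∈ bad := by
        rw [hbad, mem_filter]
        exact ⟨mem_filter.mpr ⟨mem_univ _, hNSp⟩, hHS₀⟩
      have hHne : H.Nonempty := by
        rw [← card_pos, hNSp.1]
        omega
      have h1 := hHF (hfmem H hHne)
      rw [mem_sdiff] at h1
      exact h1.2 (mem_image_of_mem f hHbad)
    · have hFc : k - bad.card ≤ (S₀ \ bad.image f).card := by
        calc k - bad.card ≤ S₀.card - (bad.image f).card := by
              have h1 := card_image_le (f := f) (s := bad)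
              omega
          _ ≤ (S₀ \ bad.image f).card := le_card_sdiff _ _
      have hbadk : (bad.card : ℝ) ≤ (k:ℝ)/2 := by
        have h1 : ((2*bad.card : ℕ):ℝ) ≤ (k:ℝ) := Nat.cast_le.mpr h2bad
        push_cast at h1
        linarith
      have hFcR : (k:ℝ) - bad.card ≤ ((S₀ \ bad.image f).card : ℝ) := by
        have h1 : ((k - bad.card : ℕ):ℝ) ≤ ((S₀ \ bad.image f).card:ℝ) := Nat.cast_le.mpr hFc
        have h2 : bad.card ≤ k := by omega
        rwa [Nat.cast_sub h2] at h1
      calc (1/16) * x = (x/8)/2 := by ring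
        _ ≤ (k:ℝ)/2 := by linarith
        _ ≤ (k:ℝ) - bad.card := by linarith
        _ ≤ ((S₀ \ bad.image f).card : ℝ) := hFcR
  · -- degenerate case: a small family suffices
    rw [not_and_or] at hmain
    set m := min (2 ^ n) (r - 1) with hm
    obtain ⟨F, _hFsub, hFcard⟩ := Finset.exists_subset_card_eq
      (s := (Finset.univ : Finset (Finset (Fin n)))) (n := m) (by rw [hcu]; exact min_le_left _ _)
    have h2n : (2:ℕ) ≤ 2 ^ n := by
      calc (2:ℕ) = 2 ^ 1 := by norm_num
        _ ≤ 2 ^ n := Nat.pow_le_pow_right (by norm_num) hn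
    refine ⟨F, ?_, ?_⟩
    · intro H hHF hNSp
      have h1 : H.card ≤ m := hFcard ▸ card_le_card hHF
      have h2 : H.card = r := hNSp.1
      omega
    · rw [hFcard]
      have hm1 : (1:ℝ) ≤ (m:ℝ) := by
        have : 1 ≤ m := by omega
        exact_mod_cast this
      rcases hmain with hx8 | h2r
      · push_neg at hx8
        linarith
      · push_neg at h2r
        have h2rR : (2:ℝ) ^ n < 2 * r := by
          have := Nat.cast_lt (α := ℝ).mpr h2r
          push_cast at this
          linarith
        have hmR : (m:ℝ) = min ((2:ℝ)^n) ((r:ℝ) - 1) := by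
          rw [hm]
          push_cast [Nat.cast_min]
          rw [hcast1]
        rw [hmR, le_min_iff]
        constructor
        · linarith
        · linarith
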